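/- Every simple graph on n vertices with no 4-cycle (no subgraph isomorphic to C4) has at most (n/4)(1 + √(4n − 3)) edges. -/

import Mathlib

open Finset
open scoped Classical

/-- `G` contains a 4-cycle as a subgraph. -/
def HasC4 {V : Type*} (G : SimpleGraph V) : Prop :=
  ∃ a b c d : V, a ≠ b ∧ a ≠ c ∧ a ≠ d ∧ b ≠ c ∧ b ≠ d ∧ c ≠ d ∧
    G.Adj a b ∧ G.Adj b c ∧ G.Adj c d ∧ G.Adj d a

lemma sq_eq_two_choose (d : ℕ) : d ^ 2 = 2 * d.choose 2 + d := by
  induction d with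
  | zero => rfl
  | succ d ih =>
    have h1 : (d + 1).choose 2 = d.choose 1 + d.choose 2 := Nat.choose_succ_succ d 1
    calc (d + 1) ^ 2 = d ^ 2 + 2 * d + 1 := by ring
      _ = 2 * d.choose 2 + d + 2 * d + 1 := by rw [ih]
      _ = 2 * ((d + 1).choose 2) + (d + 1) := by rw [h1, Nat.choose_one_right]; ring

lemma key_count {n : ℕ} (G : SimpleGraph (Fin n)) (h : ¬ HasC4 G) :
    ∑ v : Fin n, (G.degree v).choose 2 ≤ n.choose 2 := by
  have hcn : ∀ (a b : Fin n), a ≠ b → ∀ c d, G.Adj c a → G.Adj c b → G.Adj d a → G.Adj d b →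
      c = d := by
    intro a b hab c d hca hcb hda hdb
    by_contra hcd
    exact h ⟨a, c, b, d, (G.ne_of_adj hca).symm, hab, (G.ne_of_adj hda).symm,
      G.ne_of_adj hcb, hcd, (G.ne_of_adj hdb).symm, hca.symm, hcb, hdb.symm, hda⟩
  have hdeg : ∀ v, (G.degree v).choose 2 = ((G.neighborFinset v).powersetCard 2).card := by
    intro v; rw [Finset.card_powersetCard]; rfl
  calc ∑ v : Fin n, (G.degree v).choose 2
      = ((univ : Finset (Fin n)).sigma fun v => (G.neighborFinset v).powersetCard 2).card := by
        rw [Finset.card_sigma]; exact Finset.sum_congr rfl fun v _ => hdeg v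
    _ ≤ ((univ : Finset (Fin n)).powersetCard 2).card := by
        apply Finset.card_le_card_of_injOn (fun p => p.2)
        · rintro ⟨v, s⟩ hp
          simp only [Finset.mem_coe, Finset.mem_sigma] at hp ⊢
          rw [Finset.mem_powersetCard] at hp ⊢
          exact ⟨Finset.subset_univ _, hp.2.2⟩
        · rintro ⟨v, s⟩ hvs ⟨w, t⟩ hwt hst
          simp only [Finset.mem_coe, Finset.mem_sigma, Finset.mem_powersetCard] at hvs hwt
          simp only at hst
          subst hst
          obtain ⟨a, b, hab, rfl⟩ := Finset.card_eq_two.1 hvs.2.2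
          have hva : G.Adj v a := (G.mem_neighborFinset v a).1 (hvs.2.1 (by simp))
          have hvb : G.Adj v b := (G.mem_neighborFinset v b).1 (hvs.2.1 (by simp))
          have hwa : G.Adj w a := (G.mem_neighborFinset w a).1 (hwt.2.1 (by simp))
          have hwb : G.Adj w b := (G.mem_neighborFinset w b).1 (hwt.2.1 (by simp))
          have : v = w := hcn a b hab v w hva hvb hwa hwb
          subst this; rfl
    _ = n.choose 2 := by rw [Finset.card_powersetCard, Finset.card_univ, Fintype.card_fin]

theorem stmt7 {n : ℕ} (G : SimpleGraph (Fin n)) (h : ¬ HasC4 G) :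
    (G.edgeSet.ncard : ℝ) ≤ (n / 4 : ℝ) * (1 + Real.sqrt (4 * n - 3)) := by
  rcases Nat.eq_zero_or_pos n with hn | hn
  · subst hn
    have : G.edgeSet = ∅ := Set.eq_empty_iff_forall_notMem.2 fun e _ =>
      Sym2.ind (fun a _ => isEmptyElim a) e trivial
    simp [this]
  -- main case
  have hsum : ∑ v : Fin n, G.degree v ^ 2 + n ≤ n ^ 2 + ∑ v : Fin n, G.degree v := by
    have h1 : ∑ v : Fin n, G.degree v ^ 2
        = 2 * ∑ v : Fin n, (G.degree v).choose 2 + ∑ v : Fin n, G.degree v := by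
      rw [Finset.mul_sum, ← Finset.sum_add_distrib]
      exact Finset.sum_congr rfl fun v _ => sq_eq_two_choose _
    have h2 := key_count G h
    have h3 : 2 * n.choose 2 + n = n ^ 2 := (sq_eq_two_choose n).symm
    omega
  have hm : (G.edgeSet.ncard : ℝ) = (G.edgeFinset.card : ℝ) := by
    rw [Set.ncard_eq_toFinset_card']; rfl
  set m : ℕ := G.edgeFinset.card with hmdef
  have hdsum : ∑ v : Fin n, G.degree v = 2 * m := G.sum_degrees_eq_twice_card_edges
  have hcs : ((∑ v : Fin n, G.degree v : ℕ) : ℝ) ^ 2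
      ≤ (n : ℝ) * ((∑ v : Fin n, G.degree v ^ 2 : ℕ) : ℝ) := by
    push_cast
    have := sq_sum_le_card_mul_sum_sq (s := (univ : Finset (Fin n)))
      (f := fun v => (G.degree v : ℝ))
    simpa using this
  have hn' : 1 ≤ n := hn
  have hN1 : (1 : ℝ) ≤ (n : ℝ) := by exact_mod_cast hn'
  have hsumR : ((∑ v : Fin n, G.degree v ^ 2 : ℕ) : ℝ) + (n : ℝ) ≤ (n : ℝ) ^ 2 + 2 * (m : ℝ) := by
    have hc := hsum
    rw [hdsum] at hc
    exact_mod_cast hc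
  have hdsumR : ((∑ v : Fin n, G.degree v : ℕ) : ℝ) = 2 * (m : ℝ) := by
    rw [hdsum]; push_cast; ring
  have hNpos : (0 : ℝ) < (n : ℝ) := by linarith
  have hmain : 4 * (m : ℝ) ^ 2 ≤ (n : ℝ) * ((n : ℝ) ^ 2 - (n : ℝ) + 2 * (m : ℝ)) := by
    have hcs' := hcs
    rw [hdsumR] at hcs'
    nlinarith [hcs', hsumR, hNpos.le]
  have hsq : (2 * (m : ℝ) - (n : ℝ) / 2) ^ 2 ≤ ((n : ℝ) / 2) ^ 2 * (4 * (n : ℝ) - 3) := by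
    nlinarith [hmain, hN1]
  have hsqrt : 2 * (m : ℝ) - (n : ℝ) / 2 ≤ ((n : ℝ) / 2) * Real.sqrt (4 * (n : ℝ) - 3) := by
    have h1 : 2 * (m : ℝ) - (n : ℝ) / 2 ≤ Real.sqrt ((2 * (m : ℝ) - (n : ℝ) / 2) ^ 2) := by
      rw [Real.sqrt_sq_eq_abs]; exact le_abs_self _
    have h2 := Real.sqrt_le_sqrt hsq
    have h3 : Real.sqrt (((n : ℝ) / 2) ^ 2 * (4 * (n : ℝ) - 3))
        = ((n : ℝ) / 2) * Real.sqrt (4 * (n : ℝ) - 3) := by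
      rw [Real.sqrt_mul (sq_nonneg _), Real.sqrt_sq (by linarith)]
    linarith [h1, h2, h3.le, h3.ge]
  rw [hm]
  nlinarith [hsqrt]
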